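/- Let H be a complete graph on n vertices whose edges have weights in {p, q} with p ≤ q, where the edges of weight p form a graph G. Then the minimum weight of a hamiltonian path in H equals (n−1)p + (q−p)(s* − 1), where s* is the minimum number of vertex-disjoint paths in G needed to partition the vertex set (a path may consist of a single vertex). -/

import Mathlib

/-- The weight of a path, listed as a list of vertices: the sum of `w` over
consecutive pairs. -/
def pathWeight {V : Type*} (w : V → V → ℕ) : List V → ℕ
  | a :: b :: rest => w a b + pathWeight w (b :: rest)
  | _ => 0

namespace HamAux

variable {V : Type*} (G : SimpleGraph V) [DecidableRel G.Adj]

/-- number of consecutive non-adjacent pairs -/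
def badCount : List V → ℕ
  | a :: b :: rest => (if G.Adj a b then 0 else 1) + badCount (b :: rest)
  | _ => 0

/-- split a list into maximal `G`-chains -/
def splitChains : List V → List (List V)
  | [] => []
  | [a] => [[a]]
  | a :: b :: rest =>
      let Ps := splitChains (b :: rest)
      if G.Adj a b then (a :: Ps.headI) :: Ps.tail else [a] :: Ps

theorem splitChains_ne_nil : ∀ (L : List V), L ≠ [] → splitChains G L ≠ []
  | [], h => absurd rfl h
  | [a], _ => by simp [splitChains]
  | a :: b :: rest, _ => by
      simp only [splitChains]
      split <;> simp

theorem splitChains_head : ∀ (a : V) (rest : List V),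
    ∃ Q Ps, splitChains G (a :: rest) = Q :: Ps ∧ Q.head? = some a
  | a, [] => ⟨[a], [], rfl, rfl⟩
  | a, b :: rest => by
      obtain ⟨Q, Ps, hQ, hh⟩ := splitChains_head b rest
      simp only [splitChains]
      by_cases hab : G.Adj a b
      · exact ⟨a :: (splitChains G (b :: rest)).headI, (splitChains G (b :: rest)).tail,
          by simp [hab], rfl⟩
      · exact ⟨[a], splitChains G (b :: rest), by simp [hab], rfl⟩

theorem splitChains_flatten : ∀ L : List V, (splitChains G L).flatten = L
  | [] => rfl
  | [a] => rfl
  | a :: b :: rest => by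
      have ih := splitChains_flatten (b :: rest)
      obtain ⟨Q, Ps, hQ, hh⟩ := splitChains_head G b rest
      simp only [splitChains, hQ]
      by_cases hab : G.Adj a b <;>
        simp_all [hab, List.flatten_cons]

theorem splitChains_length : ∀ L : List V, L ≠ [] →
    (splitChains G L).length = badCount G L + 1
  | [], h => absurd rfl h
  | [a], _ => rfl
  | a :: b :: rest, _ => by
      have ih := splitChains_length (b :: rest) (by simp)
      obtain ⟨Q, Ps, hQ, hh⟩ := splitChains_head G b rest
      simp only [splitChains, hQ, badCount]
      by_cases hab : G.Adj a b <;> first | (simp_all [hab]; omega) | simp_all [hab]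

theorem splitChains_pieces : ∀ L : List V, ∀ P ∈ splitChains G L,
    P ≠ [] ∧ P.Chain' G.Adj
  | [], P, h => by simp [splitChains] at h
  | [a], P, h => by
      simp [splitChains] at h; subst h; simp [List.Chain']
  | a :: b :: rest, P, h => by
      have ih := splitChains_pieces (b :: rest)
      obtain ⟨Q, Ps, hQ, hh⟩ := splitChains_head G b rest
      have hQmem : Q ∈ splitChains G (b :: rest) := by rw [hQ]; exact List.mem_cons_self
      simp only [splitChains, hQ] at h
      by_cases hab : G.Adj a b
      · simp only [if_pos hab, List.headI, List.tail] at h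
        rcases List.mem_cons.mp h with rfl | hP
        · refine ⟨by simp, ?_⟩
          simp only [List.Chain']
          rw [List.isChain_cons]
          refine ⟨?_, (ih Q hQmem).2⟩
          intro y hy
          rw [hh] at hy
          cases hy
          exact hab
        · exact ih P (by rw [hQ]; exact List.mem_cons_of_mem _ hP)
      · simp only [if_neg hab] at h
        rcases List.mem_cons.mp h with rfl | hP
        · exact ⟨by simp, by simp [List.Chain']⟩
        · exact ih P (by rw [hQ]; exact hP)

variable (p q : ℕ)

theorem pathWeight_eq (hpq : p ≤ q) : ∀ L : List V,
    pathWeight (fun u v => if G.Adj u v then p else q) L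
      = p * (L.length - 1) + (q - p) * badCount G L
  | [] => by simp [pathWeight, badCount]
  | [a] => by simp [pathWeight, badCount]
  | a :: b :: rest => by
      have ih := pathWeight_eq hpq (b :: rest)
      simp only [pathWeight, badCount, ih, List.length_cons, Nat.add_sub_cancel]
      by_cases hab : G.Adj a b
      · simp only [if_pos hab]
        ring_nf
      · simp only [if_neg hab]
        have hq : q = p + (q - p) := (Nat.add_sub_cancel' hpq).symm
        rw [Nat.mul_succ p, Nat.mul_add (q-p), Nat.mul_one]
        linarith [hq]

theorem badCount_eq_zero : ∀ L : List V, L.Chain' G.Adj → badCount G L = 0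
  | [], _ => rfl
  | [a], _ => rfl
  | a :: b :: rest, h => by
      simp only [List.Chain'] at h
      rw [List.isChain_cons_cons] at h
      simp [badCount, h.1, badCount_eq_zero (b :: rest) h.2]

theorem pathWeight_append_le (w : V → V → ℕ) (hw : ∀ u v, w u v ≤ q) :
    ∀ xs ys : List V, xs ≠ [] → ys ≠ [] →
      pathWeight w (xs ++ ys) ≤ pathWeight w xs + q + pathWeight w ys
  | [], _, hx, _ => absurd rfl hx
  | [a], ys, _, hy => by
      obtain ⟨c, ys', rfl⟩ := List.exists_cons_of_ne_nil hy
      simp only [List.singleton_append, pathWeight]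
      have := hw a c
      omega
  | a :: b :: xs', ys, _, hy => by
      have ih := pathWeight_append_le w hw (b :: xs') ys (by simp) hy
      simp only [List.cons_append, pathWeight, List.append_eq] at *
      omega

theorem length_le_flatten_length : ∀ Ls : List (List V), (∀ P ∈ Ls, P ≠ []) →
    Ls.length ≤ Ls.flatten.length
  | [], _ => le_refl _
  | P :: Ls, h => by
      have ih := length_le_flatten_length Ls (fun Q hQ => h Q (List.mem_cons_of_mem _ hQ))
      have hP : P ≠ [] := h P List.mem_cons_self
      have : 1 ≤ P.length := List.length_pos_iff.mpr hP
      simp only [List.flatten_cons, List.length_append, List.length_cons]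
      omega

theorem flatten_bound (hpq : p ≤ q) :
    ∀ Ls : List (List V), Ls ≠ [] → (∀ P ∈ Ls, P ≠ []) → (∀ P ∈ Ls, P.Chain' G.Adj) →
      pathWeight (fun u v => if G.Adj u v then p else q) Ls.flatten + p * Ls.length + q
        ≤ p * Ls.flatten.length + q * Ls.length
  | [], h, _, _ => absurd rfl h
  | [P], _, hne, hch => by
      have hP : P ≠ [] := hne P (by simp)
      have h1 : 1 ≤ P.length := List.length_pos_iff.mpr hP
      have hw := pathWeight_eq G p q hpq P
      rw [badCount_eq_zero G P (hch P (by simp))] at hw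
      simp only [List.flatten_cons, List.flatten_nil, List.append_nil, List.length_cons,
        List.length_nil, hw]
      have : p * (P.length - 1) + p = p * P.length := by
        rw [← Nat.mul_succ]
        congr 1
        omega
      nlinarith [this]
  | P :: Q :: Ls, _, hne, hch => by
      have ih := flatten_bound hpq (Q :: Ls) (by simp)
        (fun R hR => hne R (List.mem_cons_of_mem _ hR))
        (fun R hR => hch R (List.mem_cons_of_mem _ hR))
      have hP : P ≠ [] := hne P (by simp)
      have hQ : Q ≠ [] := hne Q (by simp)
      have hfl : (Q :: Ls).flatten ≠ [] := by
        simp only [List.flatten_cons, ne_eq, List.append_eq_nil_iff, not_and]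
        intro h; exact absurd h hQ
      have happ := pathWeight_append_le q (fun u v => if G.Adj u v then p else q)
        (fun u v => by split <;> omega) P (Q :: Ls).flatten hP hfl
      have hwP := pathWeight_eq G p q hpq P
      rw [badCount_eq_zero G P (hch P (by simp))] at hwP
      have h1 : 1 ≤ P.length := List.length_pos_iff.mpr hP
      have hPm : p * (P.length - 1) + p = p * P.length := by
        rw [← Nat.mul_succ]; congr 1; omega
      have hflat : (P :: Q :: Ls).flatten = P ++ (Q :: Ls).flatten := rfl
      rw [hflat]
      simp only [List.length_append, List.length_cons] at *
      rw [hwP] at happ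
      have e1 : p * (Q :: Ls).length.succ = p * (Q :: Ls).length + p := Nat.mul_succ _ _
      have e2 : q * (Q :: Ls).length.succ = q * (Q :: Ls).length + q := Nat.mul_succ _ _
      have e3 : p * (P.length + (Q :: Ls).flatten.length)
          = p * P.length + p * (Q :: Ls).flatten.length := Nat.mul_add _ _ _
      simp only [List.length_cons] at *
      nlinarith [happ, ih, hPm]

theorem flatten_map_sing : ∀ L : List V, (L.map (fun v => ([v] : List V))).flatten = L
  | [] => rfl
  | a :: L => by simp [flatten_map_sing L]

end HamAux

open HamAux

/-- Let `H` be the complete graph on `n` vertices whose edges have weight `p` on the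
edges of a graph `G` and weight `q ≥ p` elsewhere. Then the minimum weight of a
hamiltonian path in `H` equals `(n − 1)·p + (q − p)·(s* − 1)`, where `s*` is the
minimum number of vertex-disjoint paths of `G` (single vertices allowed) needed to
partition the vertex set. -/
theorem min_hamiltonian_path_eq_path_partition {V : Type*} [Fintype V] [Nonempty V]
    (G : SimpleGraph V) [DecidableRel G.Adj] (p q : ℕ) (hpq : p ≤ q) :
    sInf {s | ∃ L : List V, L.Nodup ∧ (∀ v : V, v ∈ L) ∧
        pathWeight (fun u v => if G.Adj u v then p else q) L = s} =
      (Fintype.card V - 1) * p +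
        (q - p) * (sInf {t | ∃ Ls : List (List V),
          (∀ P ∈ Ls, P ≠ []) ∧ (∀ P ∈ Ls, P.Chain' G.Adj) ∧
          Ls.flatten.Nodup ∧ (∀ v : V, v ∈ Ls.flatten) ∧ Ls.length = t} - 1) := by
  classical
  set n := Fintype.card V with hn
  set w : V → V → ℕ := fun u v => if G.Adj u v then p else q with hw
  set A := {s | ∃ L : List V, L.Nodup ∧ (∀ v : V, v ∈ L) ∧ pathWeight w L = s} with hA
  set B := {t | ∃ Ls : List (List V),
      (∀ P ∈ Ls, P ≠ []) ∧ (∀ P ∈ Ls, P.Chain' G.Adj) ∧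
      Ls.flatten.Nodup ∧ (∀ v : V, v ∈ Ls.flatten) ∧ Ls.length = t} with hB
  -- length of a nodup covering list equals n
  have hlen : ∀ L : List V, L.Nodup → (∀ v : V, v ∈ L) → L.length = n := by
    intro L hnd hcov
    have : L.toFinset = Finset.univ := by
      ext v; simp [hcov v]
    have h2 := List.toFinset_card_of_nodup hnd
    rw [this] at h2
    simpa [hn, Finset.card_univ] using h2.symm
  -- A is nonempty
  have hL0 : ∃ L : List V, L.Nodup ∧ ∀ v : V, v ∈ L :=
    ⟨Finset.univ.toList, Finset.nodup_toList _, fun v => by simp⟩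
  obtain ⟨L0, hL0nd, hL0cov⟩ := hL0
  have hAne : A.Nonempty := ⟨pathWeight w L0, L0, hL0nd, hL0cov, rfl⟩
  -- B is nonempty
  have hBne : B.Nonempty := by
    refine ⟨(L0.map (fun v => [v])).length, L0.map (fun v => [v]), ?_, ?_, ?_, ?_, rfl⟩
    · intro P hP
      simp only [List.mem_map] at hP
      obtain ⟨v, _, rfl⟩ := hP; simp
    · intro P hP
      simp only [List.mem_map] at hP
      obtain ⟨v, _, rfl⟩ := hP; simp [List.Chain']
    · simpa [flatten_map_sing] using hL0nd
    · intro v; simpa [flatten_map_sing] using hL0cov v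
  -- from a hamiltonian list produce a partition of exact matching weight
  have keyA : ∀ s ∈ A, ∃ t ∈ B, s = p * (n - 1) + (q - p) * (t - 1) := by
    rintro s ⟨L, hnd, hcov, rfl⟩
    have hLne : L ≠ [] := by
      intro h
      obtain ⟨v⟩ := ‹Nonempty V›
      have := hcov v; rw [h] at this; simp at this
    refine ⟨badCount G L + 1, ?_, ?_⟩
    · refine ⟨splitChains G L, ?_, ?_, ?_, ?_, splitChains_length G L hLne⟩
      · exact fun P hP => (splitChains_pieces G L P hP).1
      · exact fun P hP => (splitChains_pieces G L P hP).2
      · rw [splitChains_flatten]; exact hnd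
      · rw [splitChains_flatten]; exact hcov
    · rw [pathWeight_eq G p q hpq L, hlen L hnd hcov]
      simp
  -- from a partition produce a hamiltonian list of at most the right weight
  have keyB : ∀ t ∈ B, ∃ s ∈ A, s ≤ p * (n - 1) + (q - p) * (t - 1) := by
    rintro t ⟨Ls, hne, hch, hnd, hcov, rfl⟩
    refine ⟨pathWeight w Ls.flatten, ⟨Ls.flatten, hnd, hcov, rfl⟩, ?_⟩
    have hLsne : Ls ≠ [] := by
      intro h
      obtain ⟨v⟩ := ‹Nonempty V›
      have := hcov v; rw [h] at this; simp at this
    have hb := flatten_bound G p q hpq Ls hLsne hne hch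
    have hflen : Ls.flatten.length = n := hlen _ hnd hcov
    rw [hflen] at hb
    have ht1 : 1 ≤ Ls.length := List.length_pos_iff.mpr hLsne
    have htn : Ls.length ≤ n := by
      have := length_le_flatten_length Ls hne
      omega
    have hqa : q = p + (q - p) := (Nat.add_sub_cancel' hpq).symm
    have e1 : p * n = p * (n - 1) + p := by
      rw [← Nat.mul_succ]; congr 1; omega
    have e2 : (q - p) * Ls.length = (q - p) * (Ls.length - 1) + (q - p) := by
      rw [← Nat.mul_succ]; congr 1; omega
    have e3 : q * Ls.length = p * Ls.length + (q - p) * Ls.length := by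
      rw [← Nat.add_mul, ← hqa]
    linarith [hb, e1, e2, e3]
  -- conclude
  have hTmem : sInf B ∈ B := Nat.sInf_mem hBne
  have hSmem : sInf A ∈ A := Nat.sInf_mem hAne
  apply le_antisymm
  · obtain ⟨s, hs, hsle⟩ := keyB _ hTmem
    calc sInf A ≤ s := Nat.sInf_le hs
      _ ≤ p * (n - 1) + (q - p) * (sInf B - 1) := hsle
      _ = (n - 1) * p + (q - p) * (sInf B - 1) := by rw [Nat.mul_comm]
  · obtain ⟨t, ht, hst⟩ := keyA _ hSmem
    have htB : sInf B ≤ t := Nat.sInf_le ht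
    have : (q - p) * (sInf B - 1) ≤ (q - p) * (t - 1) :=
      Nat.mul_le_mul_left _ (by omega)
    rw [hst, Nat.mul_comm p]
    omega
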